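/- For every graph G, the greedy algorithm that repeatedly removes a maximum clique returns a clique partition X such that the number of edges of G not contained inside the parts of X is at most 2·OPT, where OPT is the minimum number of edges whose deletion makes G a disjoint union of complete graphs. -/

import Mathlib

/-- `GreedyFrom G R L`: the list of cliques `L` is a possible run of the greedy
algorithm (repeatedly removing a maximum clique) on the vertex set `R`. -/
def GreedyFrom {V : Type*} [DecidableEq V] (G : SimpleGraph V) :
    Finset V → List (Finset V) → Prop
  | R, [] => R = ∅
  | R, X :: L => X ⊆ R ∧ G.IsClique ↑X ∧
      (∀ Y ⊆ R, G.IsClique ↑Y → Y.card ≤ X.card) ∧ GreedyFrom G (R \ X) L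

open Finset

instance sym2BAllDecidable {V : Type*} [DecidableEq V] (p : V → Prop) [DecidablePred p] :
    ∀ e : Sym2 V, Decidable (∀ x ∈ e, p x) := fun e =>
  e.recOnSubsingleton fun a1 a2 => (fun ab : V × V =>
    (decidable_of_iff (p ab.1 ∧ p ab.2) (by
      constructor
      · rintro ⟨h1, h2⟩ x hx
        rcases Sym2.mem_iff.1 hx with rfl | rfl
        exacts [h1, h2]
      · exact fun h => ⟨h ab.1 (Sym2.mem_mk_left _ _), h ab.2 (Sym2.mem_mk_right _ _)⟩)
        : Decidable (∀ x ∈ s(ab.1, ab.2), p x))) (a1, a2)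

instance sym2BExDecidable {V : Type*} [DecidableEq V] (p : V → Prop) [DecidablePred p] :
    ∀ e : Sym2 V, Decidable (∃ x ∈ e, p x) := fun e =>
  e.recOnSubsingleton fun a1 a2 => (fun ab : V × V =>
    (decidable_of_iff (p ab.1 ∨ p ab.2) (by
      constructor
      · rintro (h1 | h2)
        · exact ⟨ab.1, Sym2.mem_mk_left _ _, h1⟩
        · exact ⟨ab.2, Sym2.mem_mk_right _ _, h2⟩
      · rintro ⟨x, hx, hp⟩
        rcases Sym2.mem_iff.1 hx with rfl | rfl
        exacts [Or.inl hp, Or.inr hp])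
        : Decidable (∃ x ∈ s(ab.1, ab.2), p x))) (a1, a2)

lemma exists_injOn_finset {V : Type*} [DecidableEq V] (s t : Finset V) (h : s.card ≤ t.card) :
    ∃ f : V → V, Set.InjOn f ↑s ∧ ∀ a ∈ s, f a ∈ t := by
  cases isEmpty_or_nonempty V with
  | inl hV => exact ⟨id, fun a ha => (IsEmpty.false a).elim, fun a ha => (IsEmpty.false a).elim⟩
  | inr hV =>
    have hle : (↑s : Set V).encard ≤ (↑t : Set V).encard := by
      simp only [Set.encard_coe_eq_coe_finsetCard]; exact_mod_cast h
    obtain ⟨f, hf1, hf2⟩ := Set.Finite.exists_injOn_of_encard_le s.finite_toSet hle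
    exact ⟨f, hf2, fun a ha => by simpa using hf1 (by simpa using ha)⟩

lemma step_bound {V : Type*} [Fintype V] [DecidableEq V]
    (G : SimpleGraph V) [DecidableRel G.Adj] (D : Finset (Sym2 V))
    (hcluster : ∀ u v w : V, (G.deleteEdges ↑D).Adj u v → (G.deleteEdges ↑D).Adj v w →
      u ≠ w → (G.deleteEdges ↑D).Adj u w)
    (R X : Finset V) (hXR : X ⊆ R) (hX : G.IsClique ↑X)
    (hmax : ∀ Y ⊆ R, G.IsClique ↑Y → Y.card ≤ X.card) :
    (G.edgeFinset.filter fun e => (∀ x ∈ e, x ∈ R) ∧ (∃ x ∈ e, x ∈ X) ∧ (∃ x ∈ e, x ∉ X)).card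
      ≤ 2 * (D.filter fun e => (∀ x ∈ e, x ∈ R) ∧ (∃ x ∈ e, x ∈ X)).card := by
  classical
  set r : V → V → Prop := fun u v => u = v ∨ (G.deleteEdges ↑D).Adj u v with hr
  have hrsymm : ∀ {u v}, r u v → r v u := fun h => h.imp Eq.symm SimpleGraph.Adj.symm
  have hrtrans : ∀ {u v w}, r u v → r v w → r u w := by
    rintro u v w (rfl | h1) h2
    · exact h2
    · rcases h2 with rfl | h2
      · exact Or.inr h1
      · by_cases huw : u = w
        · exact Or.inl huw
        · exact Or.inr (hcluster u v w h1 h2 huw)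
  set Cl : V → Finset V := fun v => Finset.univ.filter (r v) with hCl
  have mem_Cl : ∀ u v : V, u ∈ Cl v ↔ r v u := by intro u v; simp [hCl]
  have hCl_eq : ∀ {u v}, r u v → Cl u = Cl v := by
    intro u v huv
    ext w
    rw [mem_Cl, mem_Cl]
    exact ⟨fun h => hrtrans (hrsymm huv) h, fun h => hrtrans huv h⟩
  have hCl_clique : ∀ v, G.IsClique ↑(Cl v) := by
    intro v a ha b hb hab
    rw [Finset.mem_coe, mem_Cl] at ha hb
    have hr : r a b := hrtrans (hrsymm ha) hb
    rcases hr with rfl | h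
    · exact absurd rfl hab
    · exact (SimpleGraph.deleteEdges_adj.1 h).1
  have hcard : ∀ v : V, ((Cl v ∩ R) \ X).card ≤ (X \ Cl v).card := by
    intro v
    have hA : (Cl v ∩ R).card ≤ X.card :=
      hmax _ inter_subset_right ((hCl_clique v).subset (by norm_cast; exact inter_subset_left))
    have e1 := Finset.card_inter_add_card_sdiff (Cl v ∩ R) X
    have e2 := Finset.card_inter_add_card_sdiff X (Cl v)
    have e3 : (Cl v ∩ R) ∩ X = X ∩ Cl v := by
      ext a
      simp only [mem_inter]
      exact ⟨fun h => ⟨h.2, h.1.1⟩, fun h => ⟨⟨h.2, hXR h.1⟩, h.1⟩⟩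
    rw [e3] at e1
    omega
  -- choose injections, one per cluster
  have hFex : ∀ C : Finset V, ∃ f : V → V, ((C ∩ R) \ X).card ≤ (X \ C).card →
      (Set.InjOn f ↑((C ∩ R) \ X) ∧ ∀ a ∈ (C ∩ R) \ X, f a ∈ X \ C) := by
    intro C
    by_cases h : ((C ∩ R) \ X).card ≤ (X \ C).card
    · obtain ⟨f, hf1, hf2⟩ := exists_injOn_finset _ _ h
      exact ⟨f, fun _ => ⟨hf1, hf2⟩⟩
    · exact ⟨id, fun hc => absurd hc h⟩
  choose F hF using hFex
  set P : Finset (V × V) := (X ×ˢ (R \ X)).filter fun p => G.Adj p.1 p.2 with hP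
  have memP : ∀ p : V × V, p ∈ P ↔ (p.1 ∈ X ∧ p.2 ∈ R ∧ p.2 ∉ X) ∧ G.Adj p.1 p.2 := by
    intro p; simp [hP, mem_sdiff, and_assoc]
  set φ : V × V → Sym2 V :=
    fun p => if s(p.1, p.2) ∈ D then s(p.1, p.2) else s(p.1, F (Cl p.2) p.2) with hφ
  -- key facts in the non-D case
  have key : ∀ p : V × V, p ∈ P → s(p.1, p.2) ∉ D →
      p.1 ∈ Cl p.2 ∧ p.2 ∈ (Cl p.2 ∩ R) \ X ∧ F (Cl p.2) p.2 ∈ X \ Cl p.2 ∧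
        s(p.1, F (Cl p.2) p.2) ∈ D := by
    intro p hp hpD
    obtain ⟨⟨h1X, h2R, h2X⟩, hadj⟩ := (memP p).1 hp
    have hadj' : (G.deleteEdges ↑D).Adj p.1 p.2 :=
      SimpleGraph.deleteEdges_adj.2 ⟨hadj, by simpa using hpD⟩
    have hp1 : p.1 ∈ Cl p.2 := (mem_Cl _ _).2 (Or.inr hadj'.symm)
    have hp2 : p.2 ∈ (Cl p.2 ∩ R) \ X :=
      mem_sdiff.2 ⟨mem_inter.2 ⟨(mem_Cl _ _).2 (Or.inl rfl), h2R⟩, h2X⟩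
    have hw : F (Cl p.2) p.2 ∈ X \ Cl p.2 := (hF _ (hcard p.2)).2 _ hp2
    refine ⟨hp1, hp2, hw, ?_⟩
    obtain ⟨hwX, hwC⟩ := mem_sdiff.1 hw
    have hne : p.1 ≠ F (Cl p.2) p.2 := fun h => hwC (h ▸ hp1)
    have hadj2 : G.Adj p.1 (F (Cl p.2) p.2) := hX (by exact h1X) (by exact hwX) hne
    by_contra hnd
    have : (G.deleteEdges ↑D).Adj p.1 (F (Cl p.2) p.2) :=
      SimpleGraph.deleteEdges_adj.2 ⟨hadj2, by simpa using hnd⟩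
    exact hwC ((mem_Cl _ _).2 (hrtrans ((mem_Cl _ _).1 hp1) (Or.inr this)))
  have hmaps : ∀ p ∈ P, φ p ∈ D.filter fun e => (∀ x ∈ e, x ∈ R) ∧ (∃ x ∈ e, x ∈ X) := by
    intro p hp
    obtain ⟨⟨h1X, h2R, h2X⟩, hadj⟩ := (memP p).1 hp
    by_cases hpD : s(p.1, p.2) ∈ D
    · rw [hφ]; simp only [if_pos hpD]
      refine mem_filter.2 ⟨hpD, ?_, ⟨p.1, Sym2.mem_mk_left _ _, h1X⟩⟩
      intro x hx
      rcases Sym2.mem_iff.1 hx with rfl | rfl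
      · exact hXR h1X
      · exact h2R
    · obtain ⟨hp1, hp2, hw, hD⟩ := key p hp hpD
      rw [hφ]; simp only [if_neg hpD]
      refine mem_filter.2 ⟨hD, ?_, ⟨p.1, Sym2.mem_mk_left _ _, h1X⟩⟩
      intro x hx
      rcases Sym2.mem_iff.1 hx with rfl | rfl
      · exact hXR h1X
      · exact hXR (mem_sdiff.1 hw).1
  have hfst : ∀ p ∈ P, p.1 ∈ φ p := by
    intro p hp
    rw [hφ]
    by_cases hpD : s(p.1, p.2) ∈ D
    · simp only [if_pos hpD]; exact Sym2.mem_mk_left _ _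
    · simp only [if_neg hpD]; exact Sym2.mem_mk_left _ _
  have hinj : ∀ p ∈ P, ∀ q ∈ P, φ p = φ q → p.1 = q.1 → p = q := by
    intro p hp q hq hpq h1
    obtain ⟨⟨hp1X, hp2R, hp2X⟩, hpadj⟩ := (memP p).1 hp
    obtain ⟨⟨hq1X, hq2R, hq2X⟩, hqadj⟩ := (memP q).1 hq
    by_cases hpD : s(p.1, p.2) ∈ D <;> by_cases hqD : s(q.1, q.2) ∈ D
    · rw [hφ] at hpq; simp only [if_pos hpD, if_pos hqD] at hpq
      rcases Sym2.eq_iff.1 hpq with ⟨ha, hb⟩ | ⟨ha, hb⟩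
      · exact Prod.ext ha hb
      · exact absurd (ha ▸ hq2X) (fun h => h hp1X)
    · obtain ⟨hq1, hq2, hwq, hDq⟩ := key q hq hqD
      rw [hφ] at hpq; simp only [if_pos hpD, if_neg hqD] at hpq
      have : p.2 ∈ s(q.1, F (Cl q.2) q.2) := hpq ▸ Sym2.mem_mk_right p.1 p.2
      rcases Sym2.mem_iff.1 this with h | h
      · rw [h] at hp2X; exact absurd hq1X hp2X
      · rw [h] at hp2X; exact absurd (mem_sdiff.1 hwq).1 hp2X
    · obtain ⟨hp1, hp2, hwp, hDp⟩ := key p hp hpD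
      rw [hφ] at hpq; simp only [if_neg hpD, if_pos hqD] at hpq
      have : q.2 ∈ s(p.1, F (Cl p.2) p.2) := (hpq ▸ Sym2.mem_mk_right q.1 q.2 : _)
      rcases Sym2.mem_iff.1 this with h | h
      · rw [h] at hq2X; exact absurd hp1X hq2X
      · rw [h] at hq2X; exact absurd (mem_sdiff.1 hwp).1 hq2X
    · obtain ⟨hp1, hp2, hwp, hDp⟩ := key p hp hpD
      obtain ⟨hq1, hq2, hwq, hDq⟩ := key q hq hqD
      rw [hφ] at hpq; simp only [if_neg hpD, if_neg hqD] at hpq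
      have hCeq : Cl p.2 = Cl q.2 := by
        have h1' : Cl p.2 = Cl p.1 := hCl_eq ((mem_Cl _ _).1 hp1)
        have h2' : Cl q.2 = Cl q.1 := hCl_eq ((mem_Cl _ _).1 hq1)
        rw [h1', h2', h1]
      have hww : F (Cl p.2) p.2 = F (Cl q.2) q.2 := by
        rcases Sym2.eq_iff.1 hpq with ⟨ha, hb⟩ | ⟨ha, hb⟩
        · exact hb
        · exfalso
          apply (mem_sdiff.1 hwp).2
          rw [hb, hCeq]
          exact hq1
      have hinjF := (hF (Cl p.2) (hcard p.2)).1
      have hq2' : q.2 ∈ (Cl p.2 ∩ R) \ X := by rw [hCeq]; exact hq2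
      have h2 : p.2 = q.2 := by
        apply hinjF (by exact_mod_cast hp2) (by exact_mod_cast hq2')
        rw [hww, hCeq]
      exact Prod.ext h1 h2
  have hfiber : ∀ e : Sym2 V, (P.filter fun p => φ p = e).card ≤ 2 := by
    intro e
    induction e using Sym2.ind with
    | _ a b =>
      have hsub : ∀ p ∈ P.filter fun p => φ p = s(a, b), p.1 ∈ ({a, b} : Finset V) := by
        intro p hp
        obtain ⟨hpP, hpe⟩ := mem_filter.1 hp
        have hm := hfst p hpP
        rw [hpe] at hm
        rcases Sym2.mem_iff.1 hm with h | h <;> simp [h]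
      have hinj2 : Set.InjOn (Prod.fst : V × V → V) (↑(P.filter fun p => φ p = s(a, b)) : Set (V × V)) := by
        intro p hp q hq h
        rw [Finset.mem_coe, mem_filter] at hp hq
        exact hinj p hp.1 q hq.1 (hp.2.trans hq.2.symm) h
      calc (P.filter fun p => φ p = s(a, b)).card ≤ ({a, b} : Finset V).card :=
            card_le_card_of_injOn Prod.fst hsub hinj2
        _ ≤ 2 := (card_insert_le _ _).trans (by simp)
  have hsurj : ∀ e ∈ G.edgeFinset.filter
      fun e => (∀ x ∈ e, x ∈ R) ∧ (∃ x ∈ e, x ∈ X) ∧ (∃ x ∈ e, x ∉ X),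
      ∃ p ∈ P, s(p.1, p.2) = e := by
    intro e
    induction e using Sym2.ind with
    | _ a b =>
      intro he
      rw [mem_filter] at he
      obtain ⟨hedge, hRe, hXe, hnXe⟩ := he
      have hadj : G.Adj a b := by
        rwa [SimpleGraph.mem_edgeFinset, SimpleGraph.mem_edgeSet] at hedge
      have haR : a ∈ R := hRe a (Sym2.mem_mk_left a b)
      have hbR : b ∈ R := hRe b (Sym2.mem_mk_right a b)
      obtain ⟨x, hxmem, hxX⟩ := hXe
      obtain ⟨y, hymem, hyX⟩ := hnXe
      have hyab := Sym2.mem_iff.1 hymem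
      rcases Sym2.mem_iff.1 hxmem with h | h <;> rw [h] at hxX
      · have hbX : b ∉ X := by
          rcases hyab with h' | h' <;> rw [h'] at hyX
          · exact absurd hxX hyX
          · exact hyX
        exact ⟨(a, b), (memP _).2 ⟨⟨hxX, hbR, hbX⟩, hadj⟩, rfl⟩
      · by_cases haX : a ∈ X
        · have hbX : b ∉ X := by
            rcases hyab with h' | h' <;> rw [h'] at hyX
            · exact absurd haX hyX
            · exact hyX
          exact absurd hxX hbX
        · exact ⟨(b, a), (memP _).2 ⟨⟨hxX, haR, haX⟩, hadj.symm⟩, Sym2.eq_swap⟩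
  calc (G.edgeFinset.filter
        fun e => (∀ x ∈ e, x ∈ R) ∧ (∃ x ∈ e, x ∈ X) ∧ (∃ x ∈ e, x ∉ X)).card
      ≤ P.card := by
        apply Finset.card_le_card_of_surjOn (fun p : V × V => s(p.1, p.2))
        intro e he
        rw [Finset.mem_coe] at he
        obtain ⟨p, hp, hpe⟩ := hsurj e he
        exact ⟨p, Finset.mem_coe.2 hp, hpe⟩
    _ ≤ 2 * (D.filter fun e => (∀ x ∈ e, x ∈ R) ∧ (∃ x ∈ e, x ∈ X)).card :=
        card_le_mul_card_image_of_maps_to hmaps 2 (fun b _ => hfiber b)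


lemma clique_edge_count {V : Type*} [Fintype V] [DecidableEq V] (G : SimpleGraph V)
    [DecidableRel G.Adj] (X : Finset V) :
    (G.edgeFinset.filter fun e => ∀ x ∈ e, x ∈ X).card ≤ X.card.choose 2 := by
  rw [← Finset.card_powersetCard 2 X]
  have keyinj : ∀ e e' : Sym2 V, e ∈ G.edgeFinset.filter (fun e => ∀ x ∈ e, x ∈ X) →
      e' ∈ G.edgeFinset.filter (fun e => ∀ x ∈ e, x ∈ X) →
      X.filter (· ∈ e) = X.filter (· ∈ e') → e = e' := by
    intro e e'
    induction e using Sym2.ind with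
    | _ a b =>
      induction e' using Sym2.ind with
      | _ c d =>
        intro he he' heq
        obtain ⟨hedge, hmem⟩ := mem_filter.1 he
        have hadj : G.Adj a b := by
          rwa [SimpleGraph.mem_edgeFinset, SimpleGraph.mem_edgeSet] at hedge
        have haX : a ∈ X := hmem a (Sym2.mem_mk_left a b)
        have hbX : b ∈ X := hmem b (Sym2.mem_mk_right a b)
        have ha : a ∈ s(c, d) := by
          have h := mem_filter.2 ⟨haX, Sym2.mem_mk_left a b⟩
          rw [heq] at h
          exact (mem_filter.1 h).2
        have hb : b ∈ s(c, d) := by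
          have h := mem_filter.2 ⟨hbX, Sym2.mem_mk_right a b⟩
          rw [heq] at h
          exact (mem_filter.1 h).2
        rw [Sym2.eq_iff]
        rcases Sym2.mem_iff.1 ha with h1 | h1 <;> rcases Sym2.mem_iff.1 hb with h2 | h2
        · exact absurd (h1.trans h2.symm) hadj.ne
        · exact Or.inl ⟨h1, h2⟩
        · exact Or.inr ⟨h1, h2⟩
        · exact absurd (h1.trans h2.symm) hadj.ne
  apply card_le_card_of_injOn (fun e => X.filter (· ∈ e))
  · intro e he
    revert he
    induction e using Sym2.ind with
    | _ a b =>
      intro he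
      obtain ⟨hedge, hmem⟩ := mem_filter.1 he
      have hadj : G.Adj a b := by
        rwa [SimpleGraph.mem_edgeFinset, SimpleGraph.mem_edgeSet] at hedge
      have haX : a ∈ X := hmem a (Sym2.mem_mk_left a b)
      have hbX : b ∈ X := hmem b (Sym2.mem_mk_right a b)
      simp only [Finset.mem_coe, mem_powersetCard]
      refine ⟨filter_subset _ _, ?_⟩
      have hset : X.filter (· ∈ s(a, b)) = {a, b} := by
        ext x
        simp only [mem_filter, Sym2.mem_iff, mem_insert, mem_singleton]
        constructor
        · exact fun h => h.2
        · rintro (rfl | rfl) <;> simp [haX, hbX]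
      rw [hset, card_insert_of_notMem (by simp [hadj.ne]), card_singleton]
  · intro e he e' he' heq
    exact keyinj e e' he he' heq

/-- negation of "all endpoints in S" -/
lemma sym2_not_forall {V : Type*} (e : Sym2 V) (S : Finset V) :
    (¬ ∀ x ∈ e, x ∈ S) ↔ ∃ x ∈ e, x ∉ S := by
  push_neg; rfl

lemma greedy_aux {V : Type*} [Fintype V] [DecidableEq V]
    (G : SimpleGraph V) [DecidableRel G.Adj] (D : Finset (Sym2 V))
    (hcluster : ∀ u v w : V, (G.deleteEdges ↑D).Adj u v → (G.deleteEdges ↑D).Adj v w →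
      u ≠ w → (G.deleteEdges ↑D).Adj u w)
    (L : List (Finset V)) : ∀ R : Finset V, GreedyFrom G R L →
    (G.edgeFinset.filter fun e => ∀ x ∈ e, x ∈ R).card - (L.map fun X => X.card.choose 2).sum
      ≤ 2 * (D.filter fun e => ∀ x ∈ e, x ∈ R).card := by
  induction L with
  | nil =>
    intro R hR
    have hR' : R = ∅ := hR
    subst hR'
    have hempty : (G.edgeFinset.filter fun e => ∀ x ∈ e, x ∈ (∅ : Finset V)) = ∅ := by
      apply Finset.filter_eq_empty_iff.2
      intro e _
      rw [sym2_not_forall]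
      exact ⟨e.out.1, e.out_fst_mem, by simp⟩
    rw [hempty]
    simp
  | cons X L ih =>
    intro R hL
    obtain ⟨hXR, hXc, hmax, hrec⟩ := hL
    have hE1 := Finset.card_filter_add_card_filter_not
      (s := G.edgeFinset.filter fun e => ∀ x ∈ e, x ∈ R) (p := fun e => ∀ x ∈ e, x ∈ X)
    have hE2 := Finset.card_filter_add_card_filter_not
      (s := (G.edgeFinset.filter fun e => ∀ x ∈ e, x ∈ R).filter fun e => ¬ ∀ x ∈ e, x ∈ X)
      (p := fun e => ∃ x ∈ e, x ∈ X)
    have hD1 := Finset.card_filter_add_card_filter_not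
      (s := D.filter fun e => ∀ x ∈ e, x ∈ R) (p := fun e => ∃ x ∈ e, x ∈ X)
    have idA : (G.edgeFinset.filter fun e => ∀ x ∈ e, x ∈ R).filter (fun e => ∀ x ∈ e, x ∈ X)
        = G.edgeFinset.filter fun e => ∀ x ∈ e, x ∈ X := by
      rw [Finset.filter_filter]
      apply Finset.filter_congr
      intro e _
      exact ⟨fun h => h.2, fun h => ⟨fun x hx => hXR (h x hx), h⟩⟩
    have idB : ((G.edgeFinset.filter fun e => ∀ x ∈ e, x ∈ R).filter
          fun e => ¬ ∀ x ∈ e, x ∈ X).filter (fun e => ∃ x ∈ e, x ∈ X)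
        = G.edgeFinset.filter fun e =>
            (∀ x ∈ e, x ∈ R) ∧ (∃ x ∈ e, x ∈ X) ∧ (∃ x ∈ e, x ∉ X) := by
      rw [Finset.filter_filter, Finset.filter_filter]
      apply Finset.filter_congr
      intro e _
      rw [sym2_not_forall]
      tauto
    have idC : ((G.edgeFinset.filter fun e => ∀ x ∈ e, x ∈ R).filter
          fun e => ¬ ∀ x ∈ e, x ∈ X).filter (fun e => ¬ ∃ x ∈ e, x ∈ X)
        = G.edgeFinset.filter fun e => ∀ x ∈ e, x ∈ R \ X := by
      rw [Finset.filter_filter, Finset.filter_filter]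
      apply Finset.filter_congr
      intro e _
      rw [sym2_not_forall]
      push_neg
      constructor
      · rintro ⟨h1, _, h3⟩
        intro x hx
        rw [mem_sdiff]
        exact ⟨h1 x hx, h3 x hx⟩
      · intro h
        refine ⟨fun x hx => (mem_sdiff.1 (h x hx)).1, ⟨e.out.1, e.out_fst_mem,
          (mem_sdiff.1 (h e.out.1 e.out_fst_mem)).2⟩, fun x hx => (mem_sdiff.1 (h x hx)).2⟩
    have idD : (D.filter fun e => ∀ x ∈ e, x ∈ R).filter (fun e => ∃ x ∈ e, x ∈ X)
        = D.filter fun e => (∀ x ∈ e, x ∈ R) ∧ (∃ x ∈ e, x ∈ X) := by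
      rw [Finset.filter_filter]
    have idE : (D.filter fun e => ∀ x ∈ e, x ∈ R).filter (fun e => ¬ ∃ x ∈ e, x ∈ X)
        = D.filter fun e => ∀ x ∈ e, x ∈ R \ X := by
      rw [Finset.filter_filter]
      apply Finset.filter_congr
      intro e _
      push_neg
      constructor
      · rintro ⟨h1, h2⟩
        intro x hx
        rw [mem_sdiff]
        exact ⟨h1 x hx, h2 x hx⟩
      · intro h
        exact ⟨fun x hx => (mem_sdiff.1 (h x hx)).1, fun x hx => (mem_sdiff.1 (h x hx)).2⟩
    rw [idA] at hE1
    rw [idB, idC] at hE2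
    rw [idD, idE] at hD1
    have hstep := step_bound G D hcluster R X hXR hXc hmax
    have hih := ih (R \ X) hrec
    have hchoose := clique_edge_count G X
    rw [List.map_cons, List.sum_cons]
    omega

theorem greedy_two_approx_clusterDeletion {V : Type*} [Fintype V] [DecidableEq V]
    (G : SimpleGraph V) [DecidableRel G.Adj]
    (L : List (Finset V)) (hL : GreedyFrom G Finset.univ L)
    (D : Finset (Sym2 V)) (hD : ↑D ⊆ G.edgeSet)
    (hcluster : ∀ u v w : V, (G.deleteEdges ↑D).Adj u v → (G.deleteEdges ↑D).Adj v w →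
      u ≠ w → (G.deleteEdges ↑D).Adj u w) :
    G.edgeFinset.card - (L.map fun X => X.card.choose 2).sum ≤ 2 * D.card := by
  classical
  have h := greedy_aux G D hcluster L Finset.univ hL
  have h1 : (G.edgeFinset.filter fun e => ∀ x ∈ e, x ∈ (Finset.univ : Finset V))
      = G.edgeFinset := by
    apply Finset.filter_true_of_mem
    intro e _
    simp
  have h2 : (D.filter fun e => ∀ x ∈ e, x ∈ (Finset.univ : Finset V)).card ≤ D.card :=
    Finset.card_filter_le _ _
  rw [h1] at h
  omega
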